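/- Let ψ_1, …, ψ_m be finite simple graphs, let s be the largest number of edges among them, and suppose that for every r' there are only finitely many isomorphism classes in Ψ^+ of order less than r'. Then: (1) for every graph ψ in Ψ^+ and every finite simple graph G, every injective homomorphism ψ → G has image contained in the Ψ-image Ψ^+ ∩ G; and (2) if r is an integer, G is a finite simple graph with ord(Ψ^+ ∩ G) ≥ r, and ψ ∈ Ψ^+ has ord(ψ) < r, then every injective homomorphism ψ → G factors as an injective homomorphism ψ → ψ' followed by the inclusion of a subgraph ψ' of G, where ψ' lies in Ψ^+ and r ≤ ord(ψ') ≤ r + s − 1. -/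

import Mathlib

open scoped Classical

/-- The number of injective graph homomorphisms from `G` to `H`. -/
noncomputable def numInj {α β : Type*} (G : SimpleGraph α) (H : SimpleGraph β) : ℕ :=
  Nat.card {f : G →g H // Function.Injective f}

/-- There exists an injective graph homomorphism from `G` to `H`. -/
def Injects {α β : Type*} (G : SimpleGraph α) (H : SimpleGraph β) : Prop :=
  ∃ f : G →g H, Function.Injective f

/-- The order of a finite simple graph: `#E - #V`. -/
noncomputable def gOrd {α : Type*} (G : SimpleGraph α) : ℤ :=
  (Nat.card G.edgeSet : ℤ) - (Nat.card α : ℤ)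

/-- The order of a subgraph: `#E - #V`. -/
noncomputable def subOrd {α : Type*} {G : SimpleGraph α} (H : G.Subgraph) : ℤ :=
  (Nat.card H.edgeSet : ℤ) - (Nat.card H.verts : ℤ)

/-- A simple graph is pruned if every vertex has degree at least 2. -/
def PrunedS {α : Type*} (G : SimpleGraph α) : Prop :=
  ∀ v : α, 2 ≤ Nat.card (G.neighborSet v)

/-- The order of a connected component: the number of edges with both endpoints in the
component minus the number of vertices of the component. -/
noncomputable def compOrd {α : Type*} (G : SimpleGraph α) (c : G.ConnectedComponent) : ℤ :=
  (Nat.card {e : G.edgeSet // ∀ v ∈ (e : Sym2 α), G.connectedComponentMk v = c} : ℤ)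
    - (Nat.card {v : α // G.connectedComponentMk v = c} : ℤ)

/-- A simple graph is positive if it is pruned and each connected component has
order at least 1. -/
def PositiveS {α : Type*} (G : SimpleGraph α) : Prop :=
  PrunedS G ∧ ∀ c : G.ConnectedComponent, 1 ≤ compOrd G c

/-- `S` lies in `Ψ⁺`: it can be written as a union of subgraphs, each isomorphic to
some `ψ i` (the union covering all vertices and edges of `S`). -/
def IsUnionOfCopies {m : ℕ} {β : Fin m → Type*} (ψ : ∀ i, SimpleGraph (β i))
    {γ : Type*} (S : SimpleGraph γ) : Prop :=
  ∃ F : Set S.Subgraph, F.Nonempty ∧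
    (∀ H ∈ F, ∃ i, Nonempty ((ψ i) ≃g H.coe)) ∧
    (∀ v : γ, ∃ H ∈ F, v ∈ H.verts) ∧
    (∀ e ∈ S.edgeSet, ∃ H ∈ F, e ∈ H.edgeSet)

/-- The `Ψ`-image of `G`: the union of all subgraphs of `G` isomorphic to some `ψ i`. -/
noncomputable def PsiImage {m : ℕ} {β : Fin m → Type*} (ψ : ∀ i, SimpleGraph (β i))
    {γ : Type*} (G : SimpleGraph γ) : G.Subgraph :=
  sSup {H : G.Subgraph | ∃ i, Nonempty ((ψ i) ≃g H.coe)}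

section StatementAux

open SimpleGraph

variable {V W : Type*} {G : SimpleGraph V} {G' : SimpleGraph W}

/-- An injective graph homomorphism restricts to an isomorphism between a subgraph
and its image. -/
noncomputable def mapCoeIso (f : G →g G') (hf : Function.Injective f) (H : G.Subgraph) :
    H.coe ≃g (H.map f).coe where
  toEquiv := Equiv.Set.image f H.verts hf
  map_rel_iff' := by
    rintro ⟨a, ha⟩ ⟨b, hb⟩
    simp only [Equiv.Set.image_apply, Subgraph.coe_adj, Subgraph.map_adj, Relation.Map]
    constructor
    · rintro ⟨u, v, huv, hu, hv⟩
      obtain rfl := hf hu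
      obtain rfl := hf hv
      exact huv
    · exact fun h => ⟨a, b, h, rfl, rfl⟩

lemma card_edgeSet_coe (H : G.Subgraph) : Nat.card H.coe.edgeSet = Nat.card H.edgeSet := by
  rw [Nat.card_coe_set_eq, Nat.card_coe_set_eq, ← Subgraph.image_coe_edgeSet_coe,
    Set.ncard_image_of_injective _ (Sym2.map.injective Subtype.val_injective)]

lemma gOrd_eq_of_iso {α β : Type*} {A : SimpleGraph α} {B : SimpleGraph β} (e : A ≃g B) :
    gOrd A = gOrd B := by
  unfold gOrd
  rw [Nat.card_congr e.toEquiv, Nat.card_congr e.mapEdgeSet]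

lemma gOrd_coe (H : G.Subgraph) : gOrd H.coe = subOrd H := by
  unfold gOrd subOrd
  rw [card_edgeSet_coe]

lemma subgraph_finite [Finite V] : Finite G.Subgraph := by
  have h : Function.Injective (fun H : G.Subgraph => (H.verts, H.Adj)) := by
    intro H₁ H₂ h
    rw [Prod.mk.injEq] at h
    exact Subgraph.ext h.1 h.2
  exact Finite.of_injective _ h

lemma subOrd_sup_le [Finite V] (U H : G.Subgraph) :
    subOrd (U ⊔ H) ≤ subOrd U + (Nat.card H.edgeSet : ℤ) := by
  unfold subOrd
  have he : Nat.card (U ⊔ H).edgeSet ≤ Nat.card U.edgeSet + Nat.card H.edgeSet := by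
    rw [Nat.card_coe_set_eq, Nat.card_coe_set_eq, Nat.card_coe_set_eq,
      Subgraph.edgeSet_sup]
    exact Set.ncard_union_le _ _
  have hv : Nat.card U.verts ≤ Nat.card (U ⊔ H).verts := by
    rw [Nat.card_coe_set_eq, Nat.card_coe_set_eq]
    exact Set.ncard_le_ncard Set.subset_union_left (Set.toFinite _)
  omega

lemma map_sSup (f : G →g G') (F : Set G.Subgraph) :
    (sSup F).map f = sSup (Subgraph.map f '' F) := by
  ext v w
  · simp only [Subgraph.map_verts, Subgraph.verts_sSup, Set.mem_image, Set.mem_iUnion]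
    aesop
  · simp only [Subgraph.map_adj, Relation.Map, Subgraph.sSup_adj, Set.mem_image]
    constructor
    · rintro ⟨u, v', ⟨H, hH, huv⟩, rfl, rfl⟩
      exact ⟨H.map f, ⟨H, hH, rfl⟩, ⟨u, v', huv, rfl, rfl⟩⟩
    · rintro ⟨-, ⟨H, hH, rfl⟩, h⟩
      obtain ⟨u, v', huv, rfl, rfl⟩ := h
      exact ⟨u, v', ⟨H, hH, huv⟩, rfl, rfl⟩

lemma sSup_eq_top_of_covers {S : SimpleGraph V} {F : Set S.Subgraph}
    (hv : ∀ v, ∃ H ∈ F, v ∈ H.verts) (he : ∀ e ∈ S.edgeSet, ∃ H ∈ F, e ∈ H.edgeSet) :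
    sSup F = ⊤ := by
  apply le_antisymm le_top
  constructor
  · intro v _
    rw [Subgraph.verts_sSup]
    simp only [Set.mem_iUnion]
    obtain ⟨H, hH, hv'⟩ := hv v
    exact ⟨H, hH, hv'⟩
  · intro u v huv
    obtain ⟨H, hH, hE⟩ := he s(u, v) huv
    exact Subgraph.sSup_adj.mpr ⟨H, hH, hE⟩

lemma int_steps {g : ℕ → ℤ} {s : ℕ} {N : ℕ} {r : ℤ} (h0 : g 0 < r) (hN : r ≤ g N)
    (hstep : ∀ k, g (k + 1) ≤ g k + s) : ∃ k, r ≤ g k ∧ g k ≤ r + s - 1 := by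
  have hex : ∃ k, r ≤ g k := ⟨N, hN⟩
  have hk : r ≤ g (Nat.find hex) := Nat.find_spec hex
  have hk0 : Nat.find hex ≠ 0 := by
    intro h
    rw [h] at hk
    omega
  obtain ⟨j, hj'⟩ := Nat.exists_eq_succ_of_ne_zero hk0
  have hj : ¬ r ≤ g j := Nat.find_min hex (by omega)
  have := hstep j
  rw [hj'] at hk
  exact ⟨j + 1, hk, by omega⟩

lemma isUnionOfCopies_sSup {m : ℕ} {β : Fin m → Type*} (ψ : ∀ i, SimpleGraph (β i))
    (𝒞 : Set G.Subgraph) (hne : 𝒞.Nonempty)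
    (hc : ∀ H ∈ 𝒞, ∃ i, Nonempty ((ψ i) ≃g H.coe)) :
    IsUnionOfCopies ψ (sSup 𝒞).coe := by
  refine ⟨Subgraph.restrict '' 𝒞, hne.image _, ?_, ?_, ?_⟩
  · rintro _ ⟨H, hH, rfl⟩
    obtain ⟨i, ⟨e⟩⟩ := hc H hH
    refine ⟨i, ⟨e.trans ?_⟩⟩
    have hle : H ≤ sSup 𝒞 := le_sSup hH
    have h1 : ((sSup 𝒞).restrict H).map (sSup 𝒞).hom = H := by
      have := Subgraph.coeSubgraph_restrict_eq (H := sSup 𝒞) H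
      exact this.trans (inf_eq_right.mpr hle)
    have h2 := mapCoeIso (sSup 𝒞).hom Subgraph.hom_injective ((sSup 𝒞).restrict H)
    rw [h1] at h2
    exact h2.symm
  · rintro ⟨v, hv⟩
    rw [Subgraph.verts_sSup] at hv
    simp only [Set.mem_iUnion] at hv
    obtain ⟨H, hH, hvH⟩ := hv
    exact ⟨(sSup 𝒞).restrict H, ⟨H, hH, rfl⟩, hvH⟩
  · intro e he
    induction e using Sym2.ind with
    | _ a b =>
      rw [SimpleGraph.mem_edgeSet] at he
      have hadj : (sSup 𝒞).Adj a b := he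
      rw [Subgraph.sSup_adj] at hadj
      obtain ⟨H, hH, hab⟩ := hadj
      refine ⟨(sSup 𝒞).restrict H, ⟨H, hH, rfl⟩, ?_⟩
      rw [Subgraph.mem_edgeSet]
      exact ⟨he, hab⟩

end StatementAux

/-- Let `ψ 0, …, ψ (m-1)` be finite simple graphs, `s` the largest
number of edges among them, and suppose that for every `r'` there are only finitely
many isomorphism classes in `Ψ⁺` of order less than `r'`.  Then:
(1) every injective homomorphism from a member of `Ψ⁺` to a finite simple graph `G`
has image contained in the `Ψ`-image `Ψ⁺ ∩ G`; and
(2) if `ord(Ψ⁺ ∩ G) ≥ r` and `ψ₀ ∈ Ψ⁺` has `ord(ψ₀) < r`, then every injective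
homomorphism `ψ₀ → G` factors through a subgraph `ψ' ⊆ G` lying in `Ψ⁺` with
`r ≤ ord(ψ') ≤ r + s - 1`. -/
theorem injective_homs_factor {m : ℕ} {β : Fin m → Type*}
    [∀ i, Fintype (β i)] (ψ : ∀ i, SimpleGraph (β i)) (s : ℕ)
    (hs : ∀ i, Nat.card (ψ i).edgeSet ≤ s)
    (hfin : ∀ r' : ℤ, ∃ L : List (Σ n : ℕ, SimpleGraph (Fin n)),
      ∀ (γ : Type*) [Fintype γ], ∀ S : SimpleGraph γ,
        IsUnionOfCopies ψ S → gOrd S < r' → ∃ p ∈ L, Nonempty (S ≃g p.2)) :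
    (∀ (δ γ : Type*) [Fintype δ] [Fintype γ],
      ∀ (S : SimpleGraph δ) (G : SimpleGraph γ), IsUnionOfCopies ψ S →
        ∀ f : S →g G, Function.Injective f →
          (∀ v : δ, f v ∈ (PsiImage ψ G).verts) ∧
          (∀ u v : δ, S.Adj u v → (PsiImage ψ G).Adj (f u) (f v))) ∧
    (∀ (r : ℤ) (δ γ : Type*) [Fintype δ] [Fintype γ],
      ∀ (S : SimpleGraph δ) (G : SimpleGraph γ),
        r ≤ subOrd (PsiImage ψ G) → IsUnionOfCopies ψ S → gOrd S < r →
        ∀ f : S →g G, Function.Injective f →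
          ∃ ψ' : G.Subgraph, IsUnionOfCopies ψ ψ'.coe ∧
            r ≤ subOrd ψ' ∧ subOrd ψ' ≤ r + (s : ℤ) - 1 ∧
            (∀ v : δ, f v ∈ ψ'.verts) ∧
            (∀ u v : δ, S.Adj u v → ψ'.Adj (f u) (f v))) := by
  classical
  constructor
  · intro δ γ _ _ S G hS f hf
    obtain ⟨F, hFne, hFcopy, hFv, hFe⟩ := hS
    have hmem : ∀ H ∈ F, ∃ i, Nonempty ((ψ i) ≃g (H.map f).coe) := by
      intro H hH
      obtain ⟨i, ⟨e⟩⟩ := hFcopy H hH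
      exact ⟨i, ⟨e.trans (mapCoeIso f hf H)⟩⟩
    have hle : ∀ H ∈ F, H.map f ≤ PsiImage ψ G := fun H hH => le_sSup (hmem H hH)
    constructor
    · intro v
      obtain ⟨H, hH, hv⟩ := hFv v
      exact (hle H hH).1 ⟨v, hv, rfl⟩
    · intro u v huv
      obtain ⟨H, hH, hE⟩ := hFe s(u, v) huv
      exact (hle H hH).2 ⟨u, v, hE, rfl, rfl⟩
  · intro r δ γ _ _ S G hr hS hSr f hf
    haveI : Finite G.Subgraph := subgraph_finite
    obtain ⟨F, hFne, hFcopy, hFv, hFe⟩ := hS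
    set C : Set G.Subgraph := {H : G.Subgraph | ∃ i, Nonempty ((ψ i) ≃g H.coe)} with hCdef
    have hCfin : C.Finite := Set.toFinite C
    set F' : Set G.Subgraph := SimpleGraph.Subgraph.map f '' F with hF'def
    have hF'C : F' ⊆ C := by
      rintro _ ⟨H, hH, rfl⟩
      obtain ⟨i, ⟨e⟩⟩ := hFcopy H hH
      exact ⟨i, ⟨e.trans (mapCoeIso f hf H)⟩⟩
    have hFtop : sSup F = ⊤ := sSup_eq_top_of_covers hFv hFe
    have hU0 : sSup F' = (⊤ : S.Subgraph).map f := by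
      rw [hF'def, ← map_sSup, hFtop]
    have hord0 : subOrd (sSup F') = gOrd S := by
      rw [hU0]
      calc subOrd ((⊤ : S.Subgraph).map f)
          = gOrd ((⊤ : S.Subgraph).map f).coe := (gOrd_coe _).symm
        _ = gOrd (⊤ : S.Subgraph).coe := (gOrd_eq_of_iso (mapCoeIso f hf ⊤)).symm
        _ = gOrd S := gOrd_eq_of_iso SimpleGraph.Subgraph.topIso
    set l : List G.Subgraph := hCfin.toFinset.toList with hldef
    have hl : ∀ H : G.Subgraph, H ∈ l ↔ H ∈ C := by
      intro H
      rw [hldef, Finset.mem_toList, Set.Finite.mem_toFinset]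
    set g : ℕ → G.Subgraph := fun k => sSup (F' ∪ {H | H ∈ l.take k}) with hgdef
    have hg0 : g 0 = sSup F' := by
      simp [hgdef]
    have hgN : g l.length = PsiImage ψ G := by
      have h1 : {H | H ∈ l.take l.length} = C := by
        ext H
        simp [List.take_length, hl H]
      rw [hgdef]
      simp only [h1]
      rw [Set.union_eq_self_of_subset_left hF'C]
      rfl
    have hstep : ∀ k, subOrd (g (k + 1)) ≤ subOrd (g k) + (s : ℤ) := by
      intro k
      by_cases hk : k < l.length
      · have htake : {H | H ∈ l.take (k + 1)} = {H | H ∈ l.take k} ∪ {l[k]} := by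
          ext H
          simp only [Set.mem_setOf_eq, Set.mem_union, Set.mem_singleton_iff,
            List.take_succ, List.mem_append, List.getElem?_eq_getElem hk]
          simp [eq_comm]
        have hsplit : g (k + 1) = g k ⊔ l[k] := by
          simp only [hgdef, htake]
          rw [← Set.union_assoc, sSup_union, sSup_singleton]
        rw [hsplit]
        have hCk : l[k] ∈ C := (hl _).mp (List.getElem_mem hk)
        have hcard : Nat.card (l[k] : SimpleGraph.Subgraph G).edgeSet ≤ s := by
          obtain ⟨i, ⟨e⟩⟩ := hCk
          rw [← card_edgeSet_coe, ← Nat.card_congr e.mapEdgeSet]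
          exact hs i
        have hle := subOrd_sup_le (g k) l[k]
        omega
      · have h2 : l.take (k + 1) = l.take k := by
          rw [List.take_of_length_le (by omega), List.take_of_length_le (by omega)]
        simp only [hgdef, h2]
        omega
    have h0 : subOrd (g 0) < r := by rw [hg0, hord0]; exact hSr
    have hN : r ≤ subOrd (g l.length) := by rw [hgN]; exact hr
    obtain ⟨k, hk1, hk2⟩ := int_steps h0 hN hstep
    refine ⟨g k, ?_, hk1, hk2, ?_, ?_⟩
    · refine isUnionOfCopies_sSup ψ (F' ∪ {H | H ∈ l.take k}) (hFne.image _).inl ?_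
      rintro H (hH | hH)
      · exact hF'C hH
      · exact (hl H).mp (List.mem_of_mem_take hH)
    · intro v
      have h1 : sSup F' ≤ g k := sSup_le_sSup Set.subset_union_left
      apply h1.1
      rw [hU0]
      exact ⟨v, trivial, rfl⟩
    · intro u v huv
      have h1 : sSup F' ≤ g k := sSup_le_sSup Set.subset_union_left
      apply h1.2
      rw [hU0]
      exact ⟨u, v, huv, rfl, rfl⟩
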